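/- arXiv:1710.03546 — 3 statements merged into one kernel-verified Lean document; each statement's English description precedes it below -/
import Mathlib

section
/- If f ∈ W^{1,1}(ℝ) and a sequence f_j ∈ W^{1,1}(ℝ) satisfies ‖f_j − f‖_{W^{1,1}(ℝ)} → 0 as j → ∞, then ‖|f_j| − |f|‖_{W^{1,1}(ℝ)} → 0 as j → ∞. -/
open MeasureTheory Filter Topology Set

/-- `f` is a `W^{1,1}(ℝ)` function with weak derivative `f'` (absolutely continuous
representative with integrable derivative). -/
def W11 (f f' : ℝ → ℝ) : Prop :=
  MeasureTheory.Integrable f ∧ MeasureTheory.Integrable f' ∧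
    ∀ x : ℝ, f x = f 0 + ∫ t in (0:ℝ)..x, f' t

/-- The `W^{1,1}` norm of `f` (with weak derivative `f'`). -/
noncomputable def W11Norm (f f' : ℝ → ℝ) : ℝ :=
  (∫ x : ℝ, |f x|) + ∫ x : ℝ, |f' x|

/-- The non-centered fractional maximal operator of order `β`. -/
noncomputable def MB (β : ℝ) (f : ℝ → ℝ) (x : ℝ) : ℝ :=
  sSup {c : ℝ | ∃ z r : ℝ, 0 < r ∧ x ∈ Set.Icc (z - r) (z + r) ∧
    c = r ^ β * ((2 * r)⁻¹ * ∫ y in Set.Icc (z - r) (z + r), |f y|)}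

/-- `Icc (z - r) (z + r)` is a good ball for `f` at `x`. -/
def GoodBall (β : ℝ) (f : ℝ → ℝ) (x z r : ℝ) : Prop :=
  0 < r ∧ x ∈ Set.Icc (z - r) (z + r) ∧
    MB β f x = r ^ β * ((2 * r)⁻¹ * ∫ y in Set.Icc (z - r) (z + r), |f y|)

open Metric

lemma aeFTC (g : ℝ → ℝ) (hg : Integrable g) :
    ∀ᵐ x : ℝ, HasDerivAt (fun y => ∫ t in (0:ℝ)..y, g t) (g x) x := by
  filter_upwards [IsUnifLocDoublingMeasure.ae_tendsto_average (μ := (volume : Measure ℝ))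
    hg.locallyIntegrable 1] with x hx
  rw [hasDerivAt_iff_tendsto_slope]
  have hδ : Tendsto (fun y : ℝ => |y - x| / 2) (𝓝[≠] x) (𝓝[>] 0) := by
    rw [tendsto_nhdsWithin_iff]
    constructor
    · have : Tendsto (fun y : ℝ => |y - x| / 2) (𝓝 x) (𝓝 (|x - x| / 2)) :=
        (continuous_abs.comp (continuous_id.sub continuous_const)).div_const 2 |>.tendsto x
      simpa using this.mono_left nhdsWithin_le_nhds
    · filter_upwards [self_mem_nhdsWithin] with y hy
      have h1 : y - x ≠ 0 := sub_ne_zero.2 hy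
      have := abs_pos.2 h1
      exact mem_Ioi.2 (by positivity)
  have hmem : ∀ᶠ y in 𝓝[≠] x, x ∈ closedBall ((x + y) / 2) (1 * (|y - x| / 2)) := by
    filter_upwards with y
    rw [mem_closedBall, Real.dist_eq]
    rw [abs_sub_comm y x, show x - (x + y) / 2 = (x - y) / 2 by ring, abs_div]
    simp
  have := hx (fun y => (x + y) / 2) (fun y => |y - x| / 2) hδ hmem
  apply this.congr'
  filter_upwards [self_mem_nhdsWithin] with y hy
  have hIcc : closedBall ((x + y) / 2) (|y - x| / 2) = Icc (min x y) (max x y) := by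
    rw [Real.closedBall_eq_Icc]
    rcases le_total x y with h | h
    · rw [abs_of_nonneg (by linarith), min_eq_left h, max_eq_right h]
      congr 1 <;> ring
    · rw [abs_of_nonpos (by linarith), min_eq_right h, max_eq_left h]
      congr 1 <;> ring
  have hF : (∫ t in (0:ℝ)..y, g t) - ∫ t in (0:ℝ)..x, g t = ∫ t in x..y, g t := by
    rw [← intervalIntegral.integral_add_adjacent_intervals
      (hg.intervalIntegrable (a := 0) (b := x)) (hg.intervalIntegrable (a := x) (b := y))]
    ring
  rw [hIcc, slope_def_field, div_eq_inv_mul, hF, setAverage_eq, smul_eq_mul]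
  rcases (show y ≠ x from hy).lt_or_gt with h | h
  · rw [min_eq_right h.le, max_eq_left h.le, Real.volume_real_Icc_of_le (by linarith),
      integral_Icc_eq_integral_Ioc,
      intervalIntegral.integral_of_ge h.le, show y - x = -(x - y) by ring, inv_neg]
    ring
  · rw [min_eq_left h.le, max_eq_right h.le, Real.volume_real_Icc_of_le (by linarith),
      integral_Icc_eq_integral_Ioc,
      intervalIntegral.integral_of_le h.le]

lemma deriv_zero_on_zero (f g : ℝ → ℝ) (hc : Continuous f)
    (hd : ∀ᵐ x : ℝ, HasDerivAt f (g x) x) :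
    ∀ᵐ x : ℝ, f x = 0 → g x = 0 := by
  have hS : MeasurableSet {x : ℝ | f x = 0} := isClosed_eq hc continuous_const |>.measurableSet
  exact ae_imp_of_ae_restrict (by
  filter_upwards [Besicovitch.ae_tendsto_measure_inter_div volume {x : ℝ | f x = 0},
    ae_restrict_of_ae hd, ae_restrict_mem hS] with x hx hdx hxS
  by_contra hg
  have hg2 : 0 < |g x| / 2 := by positivity
  have hev : ∀ᶠ y in 𝓝 x, ‖f y - f x - (y - x) • g x‖ ≤ |g x| / 2 * ‖y - x‖ :=
    hdx.isLittleO.bound hg2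
  rw [Metric.eventually_nhds_iff] at hev
  obtain ⟨r₀, hr₀, hball⟩ := hev
  have hsub : ∀ r, 0 < r → r < r₀ → {x : ℝ | f x = 0} ∩ closedBall x r ⊆ {x} := by
    intro r hr hrr y hy
    have h1 : f y = 0 := hy.1
    have h2 : dist y x < r₀ := lt_of_le_of_lt (mem_closedBall.1 hy.2) hrr
    have h3 := hball h2
    rw [h1, hxS, Real.norm_eq_abs, Real.norm_eq_abs, smul_eq_mul] at h3
    have : |y - x| * |g x| ≤ |g x| / 2 * |y - x| := by
      calc |y - x| * |g x| = |0 - 0 - (y - x) * g x| := by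
            rw [show (0:ℝ) - 0 - (y - x) * g x = -((y - x) * g x) by ring, abs_neg, abs_mul]
      _ ≤ |g x| / 2 * |y - x| := h3
    have h4 : |y - x| = 0 := by
      by_contra h5
      have h6 : 0 < |y - x| := lt_of_le_of_ne (abs_nonneg _) (Ne.symm h5)
      nlinarith [abs_pos.2 hg]
    have : y = x := by
      have := abs_eq_zero.1 h4; linarith
    exact this
  have h0 : Tendsto (fun r => volume ({x : ℝ | f x = 0} ∩ closedBall x r)
      / volume (closedBall x r)) (𝓝[>] 0) (𝓝 0) := by
    apply Tendsto.congr' _ tendsto_const_nhds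
    filter_upwards [Ioo_mem_nhdsGT_of_mem (Set.left_mem_Ico.2 hr₀)] with r hr
    have : volume ({x : ℝ | f x = 0} ∩ closedBall x r) = 0 :=
      measure_mono_null (hsub r hr.1 hr.2) (Real.volume_singleton)
    rw [this, ENNReal.zero_div]
  have := tendsto_nhds_unique hx h0
  exact one_ne_zero this)

lemma cont_of_rep (f g : ℝ → ℝ) (hg : Integrable g)
    (hr : ∀ x, f x = f 0 + ∫ t in (0:ℝ)..x, g t) : Continuous f := by
  have : Continuous fun x : ℝ => f 0 + ∫ t in (0:ℝ)..x, g t :=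
    continuous_const.add (intervalIntegral.continuous_primitive
      (fun a b => hg.intervalIntegrable) 0)
  exact this.congr fun x => (hr x).symm

lemma hasDeriv_of_rep (f g : ℝ → ℝ) (hg : Integrable g)
    (hr : ∀ x, f x = f 0 + ∫ t in (0:ℝ)..x, g t) :
    ∀ᵐ x : ℝ, HasDerivAt f (g x) x := by
  filter_upwards [aeFTC g hg] with x hx
  have h : (fun y => f 0 + ∫ t in (0:ℝ)..y, g t) = f := funext fun y => (hr y).symm
  rw [← h]
  exact hx.const_add _

lemma abs_deriv (f f' F' : ℝ → ℝ) (hf' : Integrable f')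
    (hfr : ∀ x, f x = f 0 + ∫ t in (0:ℝ)..x, f' t)
    (hF' : Integrable F') (hFr : ∀ x, |f x| = |f 0| + ∫ t in (0:ℝ)..x, F' t) :
    ∀ᵐ x : ℝ, F' x = Real.sign (f x) * f' x ∧ (f x = 0 → f' x = 0) := by
  have hc : Continuous f := cont_of_rep f f' hf' hfr
  have hd : ∀ᵐ x : ℝ, HasDerivAt f (f' x) x := hasDeriv_of_rep f f' hf' hfr
  have hD : ∀ᵐ x : ℝ, HasDerivAt (fun y => |f y|) (F' x) x :=
    hasDeriv_of_rep (fun y => |f y|) F' hF' hFr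
  have hz : ∀ᵐ x : ℝ, f x = 0 → f' x = 0 := deriv_zero_on_zero f f' hc hd
  filter_upwards [hd, hD, hz] with x hdx hDx hzx
  refine ⟨?_, hzx⟩
  rcases lt_trichotomy (f x) 0 with h | h | h
  · have hev : (fun y => -f y) =ᶠ[𝓝 x] fun y => |f y| := by
      filter_upwards [(hc.tendsto x).eventually_lt_const h] with y hy
      rw [abs_of_neg hy]
    have h2 : HasDerivAt (fun y => |f y|) (-f' x) x :=
      hdx.neg.congr_of_eventuallyEq hev.symm
    rw [hDx.unique h2, Real.sign_of_neg h]
    ring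
  · have hmin : IsLocalMin (fun y => |f y|) x := by
      apply Filter.Eventually.of_forall
      intro y
      simp [h, abs_nonneg]
    rw [hmin.hasDerivAt_eq_zero hDx, h, Real.sign_zero]
    ring
  · have hev : (fun y => f y) =ᶠ[𝓝 x] fun y => |f y| := by
      filter_upwards [(hc.tendsto x).eventually_const_lt h] with y hy
      rw [abs_of_pos hy]
    have h2 : HasDerivAt (fun y => |f y|) (f' x) x :=
      hdx.congr_of_eventuallyEq hev.symm
    rw [hDx.unique h2, Real.sign_of_pos h]
    ring

lemma measurable_realSign : Measurable Real.sign := by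
  have h : Real.sign = fun r : ℝ => if r < 0 then (-1:ℝ) else if 0 < r then 1 else 0 := rfl
  rw [h]
  refine Measurable.ite ?_ measurable_const (Measurable.ite ?_ measurable_const measurable_const)
  · exact measurableSet_lt measurable_id measurable_const
  · exact measurableSet_lt measurable_const measurable_id

lemma abs_sign_le (r : ℝ) : |Real.sign r| ≤ 1 := by
  rcases Real.sign_apply_eq r with h | h | h <;> rw [h] <;> norm_num

theorem statement0
    (f f' F' : ℝ → ℝ) (fj fj' Fj' : ℕ → ℝ → ℝ)
    (hf : W11 f f') (hfj : ∀ j, W11 (fj j) (fj' j))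
    (hF : W11 (fun x => |f x|) F')
    (hFj : ∀ j, W11 (fun x => |fj j x|) (Fj' j))
    (hconv : Tendsto (fun j => W11Norm (fun x => fj j x - f x) (fun x => fj' j x - f' x))
      atTop (𝓝 0)) :
    Tendsto (fun j => W11Norm (fun x => |fj j x| - |f x|) (fun x => Fj' j x - F' x))
      atTop (𝓝 0) := by
  obtain ⟨hfi, hf'i, hfr⟩ := hf
  have hc : Continuous f := cont_of_rep f f' hf'i hfr
  have hcfj : ∀ j, Continuous (fj j) := fun j =>
    cont_of_rep (fj j) (fj' j) (hfj j).2.1 (hfj j).2.2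
  have hFform : ∀ᵐ x : ℝ, F' x = Real.sign (f x) * f' x ∧ (f x = 0 → f' x = 0) :=
    abs_deriv f f' F' hf'i hfr hF.2.1 hF.2.2
  have hjform : ∀ j, ∀ᵐ x : ℝ,
      Fj' j x = Real.sign (fj j x) * fj' j x ∧ (fj j x = 0 → fj' j x = 0) := fun j =>
    abs_deriv (fj j) (fj' j) (Fj' j) (hfj j).2.1 (hfj j).2.2 (hFj j).2.1 (hFj j).2.2
  simp only [W11Norm] at hconv ⊢
  have ha : Tendsto (fun j => ∫ x : ℝ, |fj j x - f x|) atTop (𝓝 0) := by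
    apply squeeze_zero (fun j => integral_nonneg fun x => abs_nonneg _)
      (fun j => le_add_of_nonneg_right (integral_nonneg fun x => abs_nonneg _)) hconv
  have hb : Tendsto (fun j => ∫ x : ℝ, |fj' j x - f' x|) atTop (𝓝 0) := by
    apply squeeze_zero (fun j => integral_nonneg fun x => abs_nonneg _)
      (fun j => le_add_of_nonneg_left (integral_nonneg fun x => abs_nonneg _)) hconv
  -- first component
  have hA : Tendsto (fun j => ∫ x : ℝ, |(|fj j x| - |f x|)|) atTop (𝓝 0) := by
    apply squeeze_zero (fun j => integral_nonneg fun x => abs_nonneg _) (fun j => ?_) ha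
    exact integral_mono ((hFj j).1.sub hF.1).abs ((hfj j).1.sub hfi).abs
      (fun x => abs_abs_sub_abs_le_abs_sub _ _)
  -- auxiliary sequence
  set h : ℕ → ℝ → ℝ := fun j x => |Real.sign (fj j x) - Real.sign (f x)| * |f' x| with hh
  have hmeas : ∀ j, AEStronglyMeasurable (h j) volume := by
    intro j
    apply AEMeasurable.aestronglyMeasurable
    exact (((measurable_realSign.comp (hcfj j).measurable).sub
      (measurable_realSign.comp hc.measurable)).abs.aemeasurable.mul hf'i.abs.aemeasurable)
  have hbound : ∀ j, ∀ᵐ x : ℝ, ‖h j x‖ ≤ 2 * |f' x| := by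
    intro j
    filter_upwards with x
    rw [Real.norm_eq_abs, hh]
    have h1 : |Real.sign (fj j x) - Real.sign (f x)| ≤ 2 := by
      have ha' := abs_le.1 (abs_sign_le (fj j x))
      have hb' := abs_le.1 (abs_sign_le (f x))
      rw [abs_le]
      constructor <;> linarith
    have h2 : (0:ℝ) ≤ |Real.sign (fj j x) - Real.sign (f x)| * |f' x| :=
      mul_nonneg (abs_nonneg _) (abs_nonneg _)
    rw [abs_of_nonneg h2]
    exact mul_le_mul_of_nonneg_right h1 (abs_nonneg _)
  have hbint : Integrable (fun x : ℝ => 2 * |f' x|) := hf'i.abs.const_mul 2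
  have hhint : ∀ j, Integrable (h j) := fun j =>
    Integrable.mono hbint (hmeas j) (by simpa using hbound j)
  have hTh : Tendsto (fun j => ∫ x : ℝ, h j x) atTop (𝓝 0) := by
    apply tendsto_of_subseq_tendsto
    intro ns hns
    have haN : Tendsto (fun k => ∫ x : ℝ, |fj (ns k) x - f x|) atTop (𝓝 0) := ha.comp hns
    have heL : Tendsto (fun k => eLpNorm (fj (ns k) - f) 1 volume) atTop (𝓝 0) := by
      have heq : ∀ k, eLpNorm (fj (ns k) - f) 1 volume
          = ENNReal.ofReal (∫ x : ℝ, |fj (ns k) x - f x|) := by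
        intro k
        rw [eLpNorm_one_eq_lintegral_enorm,
          ← ofReal_integral_norm_eq_lintegral_enorm ((hfj (ns k)).1.sub hfi)]
        simp [Real.norm_eq_abs]
      rw [funext heq]
      have h2 := (ENNReal.continuous_ofReal.tendsto 0).comp haN
      simpa [Function.comp_def] using h2
    have hTIM : TendstoInMeasure volume (fun k => fj (ns k)) atTop f :=
      tendstoInMeasure_of_tendsto_eLpNorm one_ne_zero
        (fun k => (hfj (ns k)).1.aestronglyMeasurable) hfi.aestronglyMeasurable heL
    obtain ⟨ms, _hms, haes⟩ := hTIM.exists_seq_tendsto_ae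
    refine ⟨ms, ?_⟩
    have hDCT := tendsto_integral_of_dominated_convergence (μ := (volume : Measure ℝ))
      (F := fun n => h (ns (ms n))) (f := fun _ => (0:ℝ)) (bound := fun x => 2 * |f' x|)
      (fun n => hmeas _) hbint (fun n => hbound _) ?_
    · simpa using hDCT
    · filter_upwards [haes, hFform] with x hx hFx
      by_cases hfx : f x = 0
      · have h0 : ∀ n, h (ns (ms n)) x = 0 := by
          intro n
          rw [hh]
          simp [hFx.2 hfx]
        simpa [h0] using tendsto_const_nhds (x := (0:ℝ)) (f := atTop (α := ℕ))
      · apply Tendsto.congr' _ (tendsto_const_nhds (x := (0:ℝ)))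
        rcases lt_or_gt_of_ne hfx with hneg | hpos
        · have hev : ∀ᶠ n in atTop, fj (ns (ms n)) x < 0 := hx.eventually_lt_const hneg
          filter_upwards [hev] with n hn
          rw [hh]
          simp [Real.sign_of_neg hn, Real.sign_of_neg hneg]
        · have hev : ∀ᶠ n in atTop, 0 < fj (ns (ms n)) x := hx.eventually_const_lt hpos
          filter_upwards [hev] with n hn
          rw [hh]
          simp [Real.sign_of_pos hn, Real.sign_of_pos hpos]
  -- second component
  have hB : Tendsto (fun j => ∫ x : ℝ, |Fj' j x - F' x|) atTop (𝓝 0) := by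
    apply squeeze_zero (fun j => integral_nonneg fun x => abs_nonneg _) (fun j => ?_)
      (by simpa using hb.add hTh)
    have hint1 : Integrable (fun x : ℝ => |Fj' j x - F' x|) := ((hFj j).2.1.sub hF.2.1).abs
    have hint2 : Integrable (fun x : ℝ => |fj' j x - f' x| + h j x) :=
      ((hfj j).2.1.sub hf'i).abs.add (hhint j)
    calc ∫ x : ℝ, |Fj' j x - F' x| ≤ ∫ x : ℝ, (|fj' j x - f' x| + h j x) := by
          apply integral_mono_ae hint1 hint2
          filter_upwards [hFform, hjform j] with x h1 h2
          rw [h1.1, h2.1, hh]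
          calc |Real.sign (fj j x) * fj' j x - Real.sign (f x) * f' x|
              = |Real.sign (fj j x) * (fj' j x - f' x)
                  + (Real.sign (fj j x) - Real.sign (f x)) * f' x| := by ring_nf
            _ ≤ |Real.sign (fj j x) * (fj' j x - f' x)|
                  + |(Real.sign (fj j x) - Real.sign (f x)) * f' x| := abs_add_le _ _
            _ ≤ |fj' j x - f' x| + |Real.sign (fj j x) - Real.sign (f x)| * |f' x| := by
                rw [abs_mul, abs_mul]
                have := abs_sign_le (fj j x)
                have := abs_nonneg (fj' j x - f' x)
                nlinarith
      _ = (∫ x : ℝ, |fj' j x - f' x|) + ∫ x : ℝ, h j x :=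
          integral_add ((hfj j).2.1.sub hf'i).abs (hhint j)
  simpa using hA.add hB
end

section
/- Let 0 < β < 1 and f ∈ W^{1,1}(ℝ). For almost every x ∈ ℝ, if B_x is an interval of radius r_x containing x realizing the supremum in the definition of M̃_β f(x) (a good ball), then the derivative of M̃_β f at x equals (M̃_β f)'(x) = r_x^β · (1/(2 r_x)) ∫_{B_x} (|f|)'(y) dy. -/
open MeasureTheory Filter Topology Set

namespace Stmt2Aux

/-- The primitive of `|f|`. -/
noncomputable def G (f : ℝ → ℝ) (t : ℝ) : ℝ := ∫ s in (0:ℝ)..t, |f s|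

/-- sup bound for `f`. -/
noncomputable def K (f f' : ℝ → ℝ) : ℝ := |f 0| + ∫ t : ℝ, |f' t|

/-- value of a ball -/
noncomputable def v (β : ℝ) (f : ℝ → ℝ) (z r : ℝ) : ℝ :=
  r ^ β * ((2 * r)⁻¹ * ∫ y in Set.Icc (z - r) (z + r), |f y|)

def Sset (β : ℝ) (f : ℝ → ℝ) (x : ℝ) : Set ℝ :=
  {c : ℝ | ∃ z r : ℝ, 0 < r ∧ x ∈ Set.Icc (z - r) (z + r) ∧ c = v β f z r}

variable {β : ℝ} {f f' : ℝ → ℝ}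

theorem MB_eq (x : ℝ) : MB β f x = sSup (Sset β f x) := rfl

theorem contf (hf : W11 f f') : Continuous f := by
  have : f = fun x => f 0 + ∫ t in (0:ℝ)..x, f' t := funext hf.2.2
  rw [this]
  exact continuous_const.add (hf.2.1.continuous_primitive 0)

theorem abs_le_K (hf : W11 f f') (y : ℝ) : |f y| ≤ K f f' := by
  rw [hf.2.2 y]
  refine (abs_add_le _ _).trans (add_le_add le_rfl ?_)
  rcases le_total (0:ℝ) y with h | h
  · rw [intervalIntegral.integral_of_le h]
    calc |∫ t in Set.Ioc (0:ℝ) y, f' t| ≤ ∫ t in Set.Ioc (0:ℝ) y, |f' t| := by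
          simpa using norm_integral_le_integral_norm (μ := volume.restrict (Set.Ioc (0:ℝ) y)) f'
      _ ≤ ∫ t : ℝ, |f' t| :=
          setIntegral_le_integral hf.2.1.abs (Eventually.of_forall fun t => abs_nonneg _)
  · rw [intervalIntegral.integral_of_ge h, abs_neg]
    calc |∫ t in Set.Ioc y (0:ℝ), f' t| ≤ ∫ t in Set.Ioc y (0:ℝ), |f' t| := by
          simpa using norm_integral_le_integral_norm (μ := volume.restrict (Set.Ioc y (0:ℝ))) f'
      _ ≤ ∫ t : ℝ, |f' t| :=
          setIntegral_le_integral hf.2.1.abs (Eventually.of_forall fun t => abs_nonneg _)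

theorem K_nonneg (hf : W11 f f') : 0 ≤ K f f' := (abs_nonneg _).trans (abs_le_K hf 0)

theorem G_sub (hf : W11 f f') (a b : ℝ) :
    G f b - G f a = ∫ t in a..b, |f t| :=
  intervalIntegral.integral_interval_sub_left
    (hf.1.abs.intervalIntegrable) (hf.1.abs.intervalIntegrable)

theorem integral_Icc_abs (hf : W11 f f') {a b : ℝ} (hab : a ≤ b) :
    ∫ y in Set.Icc a b, |f y| = G f b - G f a := by
  rw [G_sub hf, intervalIntegral.integral_of_le hab, integral_Icc_eq_integral_Ioc]

theorem G_lip (hf : W11 f f') (a b : ℝ) : |G f b - G f a| ≤ K f f' * |b - a| := by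
  rw [G_sub hf]
  simpa using intervalIntegral.norm_integral_le_of_norm_le_const
    (f := fun t => |f t|) (C := K f f') (fun t _ => by simpa using abs_le_K hf t)

theorem hasDerivAt_G (hf : W11 f f') (t : ℝ) : HasDerivAt (G f) (|f t|) t :=
  intervalIntegral.integral_hasDerivAt_right
    (hf.1.abs.intervalIntegrable)
    ((contf hf).abs.aestronglyMeasurable.stronglyMeasurableAtFilter)
    ((contf hf).abs.continuousAt)

theorem rpow_mul_inv {r : ℝ} (hr : 0 < r) : r ^ β * (2 * r)⁻¹ = r ^ (β - 1) / 2 := by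
  rw [Real.rpow_sub hr, Real.rpow_one, mul_inv]
  ring

theorem integral_Icc_nonneg (z r : ℝ) : 0 ≤ ∫ y in Set.Icc (z - r) (z + r), |f y| :=
  setIntegral_nonneg measurableSet_Icc fun y _ => abs_nonneg _

theorem v_nonneg {z r : ℝ} (hr : 0 < r) : 0 ≤ v β f z r := by
  have := integral_Icc_nonneg (f := f) z r
  have h1 : (0:ℝ) ≤ r ^ β := Real.rpow_nonneg hr.le β
  have h2 : (0:ℝ) ≤ (2 * r)⁻¹ := by positivity
  exact mul_nonneg h1 (mul_nonneg h2 this)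

theorem v_le_K (hf : W11 f f') {z r : ℝ} (hr : 0 < r) :
    v β f z r ≤ r ^ β * K f f' := by
  have hI : ∫ y in Set.Icc (z - r) (z + r), |f y| ≤ K f f' * (2 * r) := by
    rw [integral_Icc_abs hf (by linarith)]
    have := (abs_le.mp (G_lip hf (z - r) (z + r))).2
    have h2 : |z + r - (z - r)| = 2 * r := by rw [abs_of_nonneg (by linarith)]; ring
    rw [h2] at this; exact this
  have h1 : (0:ℝ) ≤ r ^ β := Real.rpow_nonneg hr.le β
  have h2 : (0:ℝ) < (2 * r)⁻¹ := by positivity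
  calc r ^ β * ((2 * r)⁻¹ * ∫ y in Set.Icc (z - r) (z + r), |f y|)
      ≤ r ^ β * ((2 * r)⁻¹ * (K f f' * (2 * r))) := by
        apply mul_le_mul_of_nonneg_left (mul_le_mul_of_nonneg_left hI h2.le) h1
    _ = r ^ β * K f f' := by field_simp

theorem nonempty_Sset (x : ℝ) : (Sset β f x).Nonempty :=
  ⟨v β f x 1, x, 1, one_pos, by constructor <;> simp <;> linarith, rfl⟩

theorem bddAbove_Sset (hf : W11 f f') (hβ0 : 0 < β) (hβ1 : β < 1) (x : ℝ) :
    BddAbove (Sset β f x) := by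
  refine ⟨K f f' + (∫ t : ℝ, |f t|) / 2, ?_⟩
  rintro c ⟨z, r, hr, -, rfl⟩
  have hL : (0:ℝ) ≤ ∫ t : ℝ, |f t| := integral_nonneg fun t => abs_nonneg _
  rcases le_total r 1 with h1 | h1
  · calc v β f z r ≤ r ^ β * K f f' := v_le_K hf hr
      _ ≤ 1 * K f f' := by
          apply mul_le_mul_of_nonneg_right _ (K_nonneg hf)
          exact Real.rpow_le_one hr.le h1 hβ0.le
      _ ≤ K f f' + (∫ t : ℝ, |f t|) / 2 := by linarith
  · have hI : ∫ y in Set.Icc (z - r) (z + r), |f y| ≤ ∫ t : ℝ, |f t| :=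
      setIntegral_le_integral hf.1.abs (Eventually.of_forall fun t => abs_nonneg _)
    have h2 : (0:ℝ) ≤ (2 * r)⁻¹ := by positivity
    have h3 : (0:ℝ) ≤ r ^ β := Real.rpow_nonneg hr.le β
    calc v β f z r ≤ r ^ β * ((2 * r)⁻¹ * ∫ t : ℝ, |f t|) :=
          mul_le_mul_of_nonneg_left (mul_le_mul_of_nonneg_left hI h2) h3
      _ = r ^ (β - 1) / 2 * ∫ t : ℝ, |f t| := by rw [← mul_assoc, rpow_mul_inv hr]
      _ ≤ 1 / 2 * ∫ t : ℝ, |f t| := by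
          apply mul_le_mul_of_nonneg_right _ hL
          have : r ^ (β - 1) ≤ 1 :=
            Real.rpow_le_one_of_one_le_of_nonpos h1 (by linarith)
          linarith
      _ ≤ K f f' + (∫ t : ℝ, |f t|) / 2 := by
          have := K_nonneg hf; linarith

/-- shift estimate -/
theorem v_shift (hf : W11 f f') {z r : ℝ} (hr : 0 < r) (h : ℝ) :
    |v β f (z + h) r - v β f z r| ≤ r ^ (β - 1) * K f f' * |h| := by
  have e1 : ∫ y in Set.Icc (z + h - r) (z + h + r), |f y| = G f (z + h + r) - G f (z + h - r) :=
    integral_Icc_abs hf (by linarith)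
  have e2 : ∫ y in Set.Icc (z - r) (z + r), |f y| = G f (z + r) - G f (z - r) :=
    integral_Icc_abs hf (by linarith)
  have key : v β f (z + h) r - v β f z r
      = r ^ β * (2 * r)⁻¹ * ((G f (z + h + r) - G f (z + r)) - (G f (z + h - r) - G f (z - r))) := by
    unfold v; rw [e1, e2]; ring
  rw [key, abs_mul]
  have hp : (0:ℝ) ≤ r ^ β * (2 * r)⁻¹ := by
    have := Real.rpow_nonneg hr.le β; positivity
  rw [abs_of_nonneg hp, rpow_mul_inv hr]
  have b1 : |G f (z + h + r) - G f (z + r)| ≤ K f f' * |h| := by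
    have := G_lip hf (z + r) (z + h + r)
    simpa [show z + h + r - (z + r) = h by ring] using this
  have b2 : |G f (z + h - r) - G f (z - r)| ≤ K f f' * |h| := by
    have := G_lip hf (z - r) (z + h - r)
    simpa [show z + h - r - (z - r) = h by ring] using this
  calc r ^ (β - 1) / 2 * |(G f (z + h + r) - G f (z + r)) - (G f (z + h - r) - G f (z - r))|
      ≤ r ^ (β - 1) / 2 * (K f f' * |h| + K f f' * |h|) := by
        apply mul_le_mul_of_nonneg_left _ (by positivity : (0:ℝ) ≤ r ^ (β - 1) / 2)
        exact (abs_sub _ _).trans (add_le_add b1 b2)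
    _ = r ^ (β - 1) * K f f' * |h| := by ring

/-- Lipschitz constant at level `lam`. -/
noncomputable def Clam (β : ℝ) (f f' : ℝ → ℝ) (lam : ℝ) : ℝ :=
  ((lam / (K f f' + 1)) ^ β⁻¹) ^ (β - 1) * K f f'

theorem Clam_nonneg (hf : W11 f f') {lam : ℝ} (hlam : 0 ≤ lam) : 0 ≤ Clam β f f' lam := by
  have hK := K_nonneg hf
  exact mul_nonneg (Real.rpow_nonneg (Real.rpow_nonneg (by positivity) _) _) hK

theorem lowerLip (hf : W11 f f') (hβ0 : 0 < β) (hβ1 : β < 1)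
    {lam : ℝ} (hlam : 0 < lam) {x : ℝ} (hx : lam < MB β f x) (y : ℝ) :
    MB β f x - Clam β f f' lam * |y - x| ≤ MB β f y := by
  set Kv := K f f' with hK
  have hK0 : 0 ≤ Kv := K_nonneg hf
  set r₀ : ℝ := (lam / (Kv + 1)) ^ β⁻¹ with hr₀def
  have hr₀pos : 0 < r₀ := Real.rpow_pos_of_pos (by positivity) _
  have hr₀β : r₀ ^ β = lam / (Kv + 1) :=
    Real.rpow_inv_rpow (by positivity) hβ0.ne'
  by_contra hcon
  push_neg at hcon
  set ε : ℝ := min (MB β f x - lam) (MB β f x - Clam β f f' lam * |y - x| - MB β f y) / 2 with hε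
  have hC0 : 0 ≤ Clam β f f' lam := Clam_nonneg hf hlam.le
  have hε0 : 0 < ε := by
    apply div_pos _ two_pos
    apply lt_min (by linarith) (by linarith)
  obtain ⟨c, hcS, hcgt⟩ := exists_lt_of_lt_csSup (nonempty_Sset x)
    (show MB β f x - ε < sSup (Sset β f x) by rw [← MB_eq]; linarith)
  obtain ⟨z, r, hr, hmem, rfl⟩ := hcS
  have hε1 : 2 * ε ≤ MB β f x - lam := by
    have := min_le_left (MB β f x - lam) (MB β f x - Clam β f f' lam * |y - x| - MB β f y)
    rw [hε]; linarith
  have hε2 : 2 * ε ≤ MB β f x - Clam β f f' lam * |y - x| - MB β f y := by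
    have := min_le_right (MB β f x - lam) (MB β f x - Clam β f f' lam * |y - x| - MB β f y)
    rw [hε]; linarith
  -- the ball has radius at least r₀
  have hvK : v β f z r ≤ r ^ β * Kv := v_le_K hf hr
  have hrβ : r₀ ^ β < r ^ β := by
    rw [hr₀β]
    have h1 : lam < v β f z r := by linarith
    have h2 : r ^ β * Kv < r ^ β * (Kv + 1) := by
      have := Real.rpow_pos_of_pos hr β; nlinarith
    rw [div_lt_iff₀ (by positivity)]
    nlinarith
  have hr₀r : r₀ < r := by
    have := (Real.rpow_lt_rpow_iff hr₀pos.le hr.le hβ0).mp hrβ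
    exact this
  have hrexp : r ^ (β - 1) ≤ r₀ ^ (β - 1) :=
    Real.rpow_le_rpow_of_nonpos hr₀pos hr₀r.le (by linarith)
  -- shifted ball is admissible for y
  have hmemy : v β f (z + (y - x)) r ∈ Sset β f y := by
    refine ⟨z + (y - x), r, hr, ?_, rfl⟩
    simp only [Set.mem_Icc] at hmem ⊢
    constructor <;> linarith [hmem.1, hmem.2]
  have hley : v β f (z + (y - x)) r ≤ MB β f y := by
    rw [MB_eq]
    exact le_csSup (bddAbove_Sset hf hβ0 hβ1 y) hmemy
  have hshift := v_shift (β := β) (z := z) hf hr (y - x)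
  have habs := abs_sub_abs_le_abs_sub (v β f (z + (y - x)) r) (v β f z r)
  have hCb : r ^ (β - 1) * Kv * |y - x| ≤ Clam β f f' lam * |y - x| := by
    unfold Clam
    rw [← hr₀def, ← hK]
    have : r ^ (β - 1) * Kv ≤ r₀ ^ (β - 1) * Kv :=
      mul_le_mul_of_nonneg_right hrexp hK0
    exact mul_le_mul_of_nonneg_right this (abs_nonneg _)
  have h5 : v β f z r - v β f (z + (y - x)) r ≤ r ^ (β - 1) * Kv * |y - x| := by
    have := (abs_le.mp hshift).1
    linarith [neg_abs_le (v β f (z + (y - x)) r - v β f z r), abs_le.mp hshift]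
  linarith

theorem max_sub_le (hf : W11 f f') (hβ0 : 0 < β) (hβ1 : β < 1)
    {lam : ℝ} (hlam : 0 < lam) (x y : ℝ) :
    max lam (MB β f x) - max lam (MB β f y) ≤ Clam β f f' lam * |x - y| := by
  have hC0 : 0 ≤ Clam β f f' lam := Clam_nonneg hf hlam.le
  rcases le_or_gt (MB β f x) lam with h | h
  · have h1 : max lam (MB β f x) = lam := max_eq_left h
    have h2 : lam ≤ max lam (MB β f y) := le_max_left _ _
    nlinarith [abs_nonneg (x - y)]
  · have h1 : max lam (MB β f x) = MB β f x := max_eq_right h.le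
    have h2 := lowerLip hf hβ0 hβ1 hlam h y
    have h3 : MB β f y ≤ max lam (MB β f y) := le_max_right _ _
    rw [abs_sub_comm] at h2
    linarith

theorem lipschitz_max (hf : W11 f f') (hβ0 : 0 < β) (hβ1 : β < 1)
    {lam : ℝ} (hlam : 0 < lam) :
    LipschitzWith (Real.toNNReal (Clam β f f' lam)) (fun x => max lam (MB β f x)) := by
  have hC0 : 0 ≤ Clam β f f' lam := Clam_nonneg hf hlam.le
  apply LipschitzWith.of_dist_le_mul
  intro x y
  rw [Real.dist_eq, Real.dist_eq, Real.coe_toNNReal _ hC0, abs_sub_le_iff]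
  exact ⟨max_sub_le hf hβ0 hβ1 hlam x y, by
    rw [abs_sub_comm]; exact max_sub_le hf hβ0 hβ1 hlam y x⟩

theorem MB_zero (hβ0 : 0 < β) (hzero : ∀ y, f y = 0) (x : ℝ) : MB β f x = 0 := by
  rw [MB_eq]
  have hz : ∀ c ∈ Sset β f x, c = 0 := by
    rintro c ⟨z, r, hr, -, rfl⟩
    unfold v
    simp [hzero]
  apply le_antisymm
  · exact Real.sSup_le (fun c hc => (hz c hc).le) le_rfl
  · obtain ⟨c, hc⟩ := nonempty_Sset (β := β) (f := f) x
    have := hz c hc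
    subst this
    exact le_csSup ⟨0, fun d hd => (hz d hd).le⟩ hc

theorem MB_pos (hf : W11 f f') (hβ0 : 0 < β) (hβ1 : β < 1)
    (hnz : ¬ ∀ y, f y = 0) (x : ℝ) : 0 < MB β f x := by
  push_neg at hnz
  obtain ⟨y₀, hy₀⟩ := hnz
  have hcont := contf hf
  have hfy₀ : 0 < |f y₀| := abs_pos.mpr hy₀
  -- find a small interval where |f| is bounded below
  obtain ⟨δ, hδ0, hδ⟩ : ∃ δ > 0, ∀ y, |y - y₀| < δ → |f y₀| / 2 < |f y| := by
    have hca : ContinuousAt (fun y => |f y|) y₀ := (hcont.abs).continuousAt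
    rw [Metric.continuousAt_iff] at hca
    obtain ⟨δ, hδ0, hδ⟩ := hca (|f y₀| / 2) (by linarith)
    refine ⟨δ, hδ0, fun y hy => ?_⟩
    have := hδ (show dist y y₀ < δ by rwa [Real.dist_eq])
    rw [Real.dist_eq] at this
    have := abs_lt.mp this
    linarith [this.1]
  -- the integral of |f| over that interval is positive
  have hIpos : 0 < ∫ t in (y₀ - δ/2)..(y₀ + δ/2), |f t| := by
    apply intervalIntegral.intervalIntegral_pos_of_pos_on
      (hf.1.abs.intervalIntegrable) _ (by linarith)
    intro t ht
    have : |t - y₀| < δ := by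
      rw [abs_lt]; constructor <;> [linarith [ht.1]; linarith [ht.2]]
    linarith [hδ t this]
  -- big ball around x containing that interval
  set R : ℝ := |x - y₀| + δ with hR
  have hR0 : 0 < R := by positivity
  have hsub : Set.Icc (y₀ - δ/2) (y₀ + δ/2) ⊆ Set.Icc (x - R) (x + R) := by
    intro t ht
    simp only [Set.mem_Icc] at ht ⊢
    have h2 := neg_abs_le (x - y₀)
    have h3 := le_abs_self (x - y₀)
    constructor <;> [linarith [ht.1]; linarith [ht.2]]
  have hIle : ∫ t in Set.Icc (y₀ - δ/2) (y₀ + δ/2), |f t| ≤ ∫ t in Set.Icc (x - R) (x + R), |f t| := by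
    apply setIntegral_mono_set (hf.1.abs.integrableOn)
      (Eventually.of_forall fun t => abs_nonneg _)
      (HasSubset.Subset.eventuallyLE hsub)
  have hIcc : ∫ t in Set.Icc (y₀ - δ/2) (y₀ + δ/2), |f t| = ∫ t in (y₀ - δ/2)..(y₀ + δ/2), |f t| := by
    rw [intervalIntegral.integral_of_le (by linarith), integral_Icc_eq_integral_Ioc]
  have hmem : v β f x R ∈ Sset β f x :=
    ⟨x, R, hR0, Set.mem_Icc.mpr ⟨by linarith, by linarith⟩, rfl⟩
  have hvpos : 0 < v β f x R := by
    unfold v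
    have h1 : 0 < R ^ β := Real.rpow_pos_of_pos hR0 β
    have h2 : (0:ℝ) < (2 * R)⁻¹ := by positivity
    have h3 : 0 < ∫ t in Set.Icc (x - R) (x + R), |f t| := by
      rw [← hIcc] at hIpos; linarith
    positivity
  rw [MB_eq]
  exact lt_of_lt_of_le hvpos (le_csSup (bddAbove_Sset hf hβ0 hβ1 x) hmem)

theorem ae_diff (hf : W11 f f') (hβ0 : 0 < β) (hβ1 : β < 1) :
    ∀ᵐ x ∂(volume : Measure ℝ), DifferentiableAt ℝ (MB β f) x := by
  by_cases hzero : ∀ y, f y = 0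
  · have hc : MB β f = fun _ => 0 := funext (MB_zero hβ0 hzero)
    filter_upwards with x
    rw [hc]
    exact differentiableAt_const 0
  · have hae : ∀ n : ℕ, ∀ᵐ x ∂(volume : Measure ℝ),
        DifferentiableAt ℝ (fun y => max ((n:ℝ)+1)⁻¹ (MB β f y)) x := fun n =>
      (lipschitz_max hf hβ0 hβ1 (by positivity)).ae_differentiableAt
    filter_upwards [ae_all_iff.mpr hae] with x hx
    have hM := MB_pos hf hβ0 hβ1 hzero x
    obtain ⟨n, hn⟩ := exists_nat_gt (MB β f x)⁻¹
    have hlam : (0:ℝ) < ((n:ℝ)+1)⁻¹ := by positivity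
    have hlt : ((n:ℝ)+1)⁻¹ < MB β f x := by
      have h1 : (MB β f x)⁻¹ < (n:ℝ)+1 := hn.trans (lt_add_one _)
      have := (inv_lt_inv₀ (show (0:ℝ) < (n:ℝ)+1 by positivity) (show (0:ℝ) < (MB β f x)⁻¹ by positivity)).mpr h1
      rwa [inv_inv] at this
    set lam : ℝ := ((n:ℝ)+1)⁻¹ with hlamdef
    have hC0 := Clam_nonneg (β := β) hf hlam.le
    set C : ℝ := Clam β f f' lam with hCdef
    have hev : (fun y => max lam (MB β f y)) =ᶠ[𝓝 x] MB β f := by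
      rw [Filter.eventuallyEq_iff_exists_mem]
      refine ⟨Metric.ball x ((MB β f x - lam)/(C + 1)),
        Metric.ball_mem_nhds _ (by apply div_pos <;> linarith), fun y hy => ?_⟩
      have h1 := lowerLip hf hβ0 hβ1 hlam hlt y
      rw [Metric.mem_ball, Real.dist_eq] at hy
      have hd : (C + 1) * ((MB β f x - lam)/(C + 1)) = MB β f x - lam := by
        field_simp
      have h3 : C * |y - x| < MB β f x - lam := by
        nlinarith [abs_nonneg (y - x)]
      have : lam < MB β f y := by linarith
      exact max_eq_right this.le
    exact (hx n).congr_of_eventuallyEq hev.symm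

theorem integral_Icc_F' (f F' : ℝ → ℝ) (hF : W11 (fun x => |f x|) F') {a b : ℝ} (hab : a ≤ b) :
    ∫ y in Set.Icc a b, F' y = |f b| - |f a| := by
  have h1 := hF.2.2 a
  have h2 := hF.2.2 b
  simp only at h1 h2
  have h3 : (∫ t in (0:ℝ)..b, F' t) - ∫ t in (0:ℝ)..a, F' t = ∫ t in a..b, F' t :=
    intervalIntegral.integral_interval_sub_left
      (hF.2.1.intervalIntegrable) (hF.2.1.intervalIntegrable)
  rw [intervalIntegral.integral_of_le hab] at h3
  rw [integral_Icc_eq_integral_Ioc, ← h3]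
  linarith

end Stmt2Aux

open Stmt2Aux in
theorem statement2
    (β : ℝ) (hβ0 : 0 < β) (hβ1 : β < 1)
    (f f' F' : ℝ → ℝ) (hf : W11 f f') (hF : W11 (fun x => |f x|) F') :
    ∀ᵐ x ∂(volume : Measure ℝ), ∀ z r : ℝ, GoodBall β f x z r →
      deriv (MB β f) x = r ^ β * ((2 * r)⁻¹ * ∫ y in Set.Icc (z - r) (z + r), F' y) := by
  filter_upwards [ae_diff hf hβ0 hβ1] with x hx z r hgb
  obtain ⟨hr, hmem, heq⟩ := hgb
  rw [Set.mem_Icc] at hmem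
  -- the moving ball average
  set φ : ℝ → ℝ := fun t => r ^ β * ((2 * r)⁻¹ * (G f (z + r + t) - G f (z - r + t))) with hφdef
  have hφd : HasDerivAt φ (r ^ β * ((2 * r)⁻¹ * (|f (z + r)| - |f (z - r)|))) 0 := by
    have h1 : HasDerivAt (fun t : ℝ => G f (z + r + t)) (|f (z + r)|) 0 := by
      have := (hasDerivAt_G hf (z + r + 0)).comp 0 ((hasDerivAt_id (0:ℝ)).const_add (z + r))
      simpa [Function.comp_def] using this
    have h2 : HasDerivAt (fun t : ℝ => G f (z - r + t)) (|f (z - r)|) 0 := by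
      have := (hasDerivAt_G hf (z - r + 0)).comp 0 ((hasDerivAt_id (0:ℝ)).const_add (z - r))
      simpa [Function.comp_def] using this
    exact ((h1.sub h2).const_mul ((2 * r)⁻¹)).const_mul (r ^ β)
  -- φ touches MB∘(x+·) from below at 0
  have hge : ∀ t, φ t ≤ MB β f (x + t) := by
    intro t
    have hmemS : v β f (z + t) r ∈ Sset β f (x + t) :=
      ⟨z + t, r, hr, Set.mem_Icc.mpr ⟨by linarith, by linarith⟩, rfl⟩
    have hveq : v β f (z + t) r = φ t := by
      unfold v
      rw [integral_Icc_abs hf (by linarith),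
        show z + t + r = z + r + t by ring, show z + t - r = z - r + t by ring]
    rw [← hveq, MB_eq]
    exact le_csSup (bddAbove_Sset hf hβ0 hβ1 (x + t)) hmemS
  have hg0 : MB β f x = φ 0 := by
    rw [heq, hφdef]
    simp only [add_zero]
    rw [integral_Icc_abs hf (by linarith)]
  -- local minimum of the difference
  set g : ℝ → ℝ := fun t => MB β f (x + t) - φ t with hgdef
  have hgmin : IsLocalMin g 0 := by
    apply Filter.Eventually.of_forall
    intro t
    have := hge t
    simp only [hgdef, add_zero, ← hg0]
    linarith [hge 0]
  have hMc : DifferentiableAt ℝ (fun t : ℝ => MB β f (x + t)) 0 := by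
    have hx' : DifferentiableAt ℝ (MB β f) (x + 0) := by simpa using hx
    have := hx'.comp (0:ℝ) ((differentiableAt_id.const_add x) : DifferentiableAt ℝ (fun t : ℝ => x + t) 0)
    simpa [Function.comp_def] using this
  have hgdiff : DifferentiableAt ℝ g 0 := hMc.sub hφd.differentiableAt
  have hderiv0 : deriv g 0 = 0 := hgmin.deriv_eq_zero
  have hsplit : deriv g 0 = deriv (fun t : ℝ => MB β f (x + t)) 0 - deriv φ 0 :=
    deriv_sub hMc hφd.differentiableAt
  have hshift : deriv (fun t : ℝ => MB β f (x + t)) 0 = deriv (MB β f) x := by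
    rw [deriv_comp_const_add]
    norm_num
  have hφ0 : deriv φ 0 = r ^ β * ((2 * r)⁻¹ * (|f (z + r)| - |f (z - r)|)) := hφd.deriv
  have hfinal : deriv (MB β f) x = r ^ β * ((2 * r)⁻¹ * (|f (z + r)| - |f (z - r)|)) := by
    rw [← hshift, ← hφ0]
    linarith [hsplit, hderiv0]
  rw [hfinal, integral_Icc_F' f F' hF (by linarith : z - r ≤ z + r)]
end

section
/- Let 0 < β < 1, f ∈ W^{1,1}(ℝ) with f ≠ 0, K ⊂ ℝ compact, C_K = min_{x∈K} M̃_β f(x) > 0 and C̄_K = max_{x∈K} M̃ f(x) > 0. If g ∈ W^{1,1}(ℝ) satisfies ‖M̃_β g − M̃_β f‖_∞ ≤ C_K/2 and ‖M̃ g − M̃ f‖_∞ ≤ C̄_K/2, then every good radius r for g at a point x ∈ K satisfies r ≥ (C_K/(3 C̄_K))^{1/β}. -/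
open MeasureTheory Filter Topology Set

theorem statement5
    (β : ℝ) (hβ0 : 0 < β) (hβ1 : β < 1)
    (f f' g g' : ℝ → ℝ) (hf : W11 f f') (hf0 : f ≠ 0) (hg : W11 g g')
    (K : Set ℝ) (hK : IsCompact K) (hKne : K.Nonempty)
    (CK CbK : ℝ)
    (hCK : IsLeast ((fun x => MB β f x) '' K) CK) (hCKpos : 0 < CK)
    (hCb : IsGreatest ((fun x => MB 0 f x) '' K) CbK) (hCbpos : 0 < CbK)
    (hg1 : ∀ x : ℝ, |MB β g x - MB β f x| ≤ CK / 2)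
    (hg2 : ∀ x : ℝ, |MB 0 g x - MB 0 f x| ≤ CbK / 2) :
    ∀ x ∈ K, ∀ z r : ℝ, GoodBall β g x z r → (CK / (3 * CbK)) ^ (1 / β) ≤ r := by
  intro x hx z r hGB
  obtain ⟨hr, hxB, hMB⟩ := hGB
  obtain ⟨hgint, hg'int, hgrep⟩ := hg
  -- g is bounded by C := |g 0| + ∫ |g'|
  set C : ℝ := |g 0| + ∫ t : ℝ, |g' t| with hCdef
  have hgbd : ∀ y : ℝ, |g y| ≤ C := by
    intro y
    have h1 : |∫ t in (0:ℝ)..y, g' t| ≤ ∫ t in Set.uIoc 0 y, |g' t| := by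
      simpa using (intervalIntegral.norm_integral_le_integral_norm_uIoc :
        ‖∫ t in (0:ℝ)..y, g' t‖ ≤ ∫ t in Set.uIoc 0 y, ‖g' t‖)
    have h2 : ∫ t in Set.uIoc 0 y, |g' t| ≤ ∫ t : ℝ, |g' t| := by
      apply setIntegral_le_integral hg'int.abs
      filter_upwards with t using abs_nonneg _
    calc |g y| = |g 0 + ∫ t in (0:ℝ)..y, g' t| := by rw [← hgrep y]
      _ ≤ |g 0| + |∫ t in (0:ℝ)..y, g' t| := abs_add_le _ _
      _ ≤ C := by rw [hCdef]; linarith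
  -- average bound
  have havgbd : ∀ z' r' : ℝ, 0 < r' →
      (2 * r')⁻¹ * ∫ y in Set.Icc (z' - r') (z' + r'), |g y| ≤ C := by
    intro z' r' hr'
    have hmeas : (volume (Set.Icc (z' - r') (z' + r'))).toReal = 2 * r' := by
      rw [Real.volume_Icc]
      rw [ENNReal.toReal_ofReal (by linarith)]
      ring
    have hint : ∫ y in Set.Icc (z' - r') (z' + r'), |g y| ≤ C * (2 * r') := by
      calc ∫ y in Set.Icc (z' - r') (z' + r'), |g y|
          ≤ ∫ _ in Set.Icc (z' - r') (z' + r'), C := by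
            apply setIntegral_mono_on (hgint.abs.integrableOn)
              (integrableOn_const (by rw [Real.volume_Icc]; exact ENNReal.ofReal_ne_top))
              measurableSet_Icc
            intro y _; exact hgbd y
        _ = C * (2 * r') := by rw [setIntegral_const, smul_eq_mul, measureReal_def, hmeas, mul_comm]
    rw [inv_mul_le_iff₀ (by linarith)]
    linarith [hint]
  set avg : ℝ := (2 * r)⁻¹ * ∫ y in Set.Icc (z - r) (z + r), |g y| with havg
  have havgnn : 0 ≤ avg := by
    apply mul_nonneg (by positivity)
    exact setIntegral_nonneg measurableSet_Icc (fun y _ => abs_nonneg _)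
  -- avg ≤ MB 0 g x
  have hmem : avg ∈ {c : ℝ | ∃ z' r' : ℝ, 0 < r' ∧ x ∈ Set.Icc (z' - r') (z' + r') ∧
      c = r' ^ (0:ℝ) * ((2 * r')⁻¹ * ∫ y in Set.Icc (z' - r') (z' + r'), |g y|)} :=
    ⟨z, r, hr, hxB, by rw [Real.rpow_zero, one_mul]⟩
  have hbdd : BddAbove {c : ℝ | ∃ z' r' : ℝ, 0 < r' ∧ x ∈ Set.Icc (z' - r') (z' + r') ∧
      c = r' ^ (0:ℝ) * ((2 * r')⁻¹ * ∫ y in Set.Icc (z' - r') (z' + r'), |g y|)} := by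
    refine ⟨C, ?_⟩
    rintro c ⟨z', r', hr', _, rfl⟩
    rw [Real.rpow_zero, one_mul]
    exact havgbd z' r' hr'
  have hle1 : avg ≤ MB 0 g x := le_csSup hbdd hmem
  -- MB 0 g x ≤ 3/2 * CbK
  have hfub : MB 0 f x ≤ CbK := hCb.2 ⟨x, hx, rfl⟩
  have hle2 : MB 0 g x ≤ 3 / 2 * CbK := by
    have := abs_le.1 (hg2 x)
    linarith [this.2]
  -- MB β g x ≥ CK / 2
  have hflb : CK ≤ MB β f x := hCK.2 ⟨x, hx, rfl⟩
  have hge : CK / 2 ≤ MB β g x := by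
    have := abs_le.1 (hg1 x)
    linarith [this.1]
  -- combine
  have hrβ : (0:ℝ) ≤ r ^ β := Real.rpow_nonneg hr.le β
  have hkey : CK / (3 * CbK) ≤ r ^ β := by
    have h1 : CK / 2 ≤ r ^ β * avg := by rw [← hMB]; exact hge
    have h2 : r ^ β * avg ≤ r ^ β * (3 / 2 * CbK) :=
      mul_le_mul_of_nonneg_left (hle1.trans hle2) hrβ
    rw [div_le_iff₀ (by linarith)]
    nlinarith
  calc (CK / (3 * CbK)) ^ (1 / β) ≤ (r ^ β) ^ (1 / β) :=
        Real.rpow_le_rpow (by positivity) hkey (by positivity)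
    _ = r := by
        rw [← Real.rpow_mul hr.le, mul_one_div, div_self hβ0.ne', Real.rpow_one]
end
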